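/- Suppose a symmetric (0,2)-tensor A on an n-dimensional (n ≥ 4) space satisfies E(A) := g ∧ A² + ((n−2)/2) A ∧ A − tr(A) g ∧ A + (((tr A)² − tr(A²))/(2(n−1))) g ∧ g = 0. Then there exists a scalar ρ with A² − (tr(A²)/n) g = ρ (A − (tr A/n) g), and moreover (A − ((tr A − ρ)/(n−2)) g) ∧ (A − ((tr A − ρ)/(n−2)) g) = 0. -/

import Mathlib

open Module

variable {V : Type*} [AddCommGroup V] [Module ℝ V]

/-- Kulkarni–Nomizu product of two (0,2)-tensors. -/
def KN (A B : V → V → ℝ) : V → V → V → V → ℝ := fun X1 X2 X3 X4 =>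
  A X1 X4 * B X2 X3 + A X2 X3 * B X1 X4 - A X1 X3 * B X2 X4 - A X2 X4 * B X1 X3

/-- The endomorphism `X ∧_A Y` applied to `Z`. -/
def wedgeEnd (A : V → V → ℝ) (X Y Z : V) : V := A Y Z • X - A X Z • Y

/-- Tachibana tensor `Q(A,T)` of a symmetric (0,2)-tensor `A` and a (0,4)-tensor `T`. -/
def Tach (A : V → V → ℝ) (T : V → V → V → V → ℝ) : V → V → V → V → V → V → ℝ :=
  fun X1 X2 X3 X4 X Y =>
    -(T (wedgeEnd A X Y X1) X2 X3 X4) - T X1 (wedgeEnd A X Y X2) X3 X4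
      - T X1 X2 (wedgeEnd A X Y X3) X4 - T X1 X2 X3 (wedgeEnd A X Y X4)

/-- if a symmetric (0,2)-tensor `A`, not proportional to `g`, satisfies
`E(A) = 0`, then `A² − (tr(A²)/n) g = ρ (A − (tr A/n) g)` for some scalar `ρ`, and
`(A − ((tr A − ρ)/(n−2)) g) ∧ (A − ((tr A − ρ)/(n−2)) g) = 0`. -/
lemma aux_dual [FiniteDimensional ℝ V] (g : LinearMap.BilinForm ℝ V) (hgn : g.Nondegenerate)
    (S : Submodule ℝ V) (w : V) (hw : w ∉ S) :
    ∃ Y : V, g Y w = 1 ∧ ∀ u ∈ S, g Y u = 0 := by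
  have hmk : (Submodule.Quotient.mk w : V ⧸ S) ≠ 0 := by
    simpa [Submodule.Quotient.mk_eq_zero] using hw
  have hex : ¬ ∀ φ : Module.Dual ℝ (V ⧸ S), φ (Submodule.Quotient.mk w) = 0 := by
    rw [Module.forall_dual_apply_eq_zero_iff]; exact hmk
  push_neg at hex
  obtain ⟨φ, hφ⟩ := hex
  set f : Module.Dual ℝ V := (φ (Submodule.Quotient.mk w))⁻¹ • (φ.comp S.mkQ) with hf
  refine ⟨(LinearMap.BilinForm.toDual g hgn).symm f, ?_, ?_⟩
  · have h1 : g ((LinearMap.BilinForm.toDual g hgn).symm f) w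
        = (LinearMap.BilinForm.toDual g hgn) ((LinearMap.BilinForm.toDual g hgn).symm f) w := by
      rw [LinearMap.BilinForm.toDual_def]
    rw [h1, LinearEquiv.apply_symm_apply, hf]
    simp [Submodule.mkQ_apply, inv_mul_cancel₀ hφ]
  · intro u hu
    have h1 : g ((LinearMap.BilinForm.toDual g hgn).symm f) u
        = (LinearMap.BilinForm.toDual g hgn) ((LinearMap.BilinForm.toDual g hgn).symm f) u := by
      rw [LinearMap.BilinForm.toDual_def]
    rw [h1, LinearEquiv.apply_symm_apply, hf]
    simp [Submodule.mkQ_apply, (Submodule.Quotient.mk_eq_zero S).2 hu]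

lemma aux_perp [FiniteDimensional ℝ V] (hn : 4 ≤ finrank ℝ V)
    (g : LinearMap.BilinForm ℝ V) (u1 u2 u3 : V) :
    ∃ X : V, X ≠ 0 ∧ g X u1 = 0 ∧ g X u2 = 0 ∧ g X u3 = 0 := by
  set φ : V →ₗ[ℝ] ℝ × (ℝ × ℝ) :=
    LinearMap.prod (g.flip u1) (LinearMap.prod (g.flip u2) (g.flip u3)) with hφ
  have hker : LinearMap.ker φ ≠ ⊥ := by
    intro h
    have hinj : Function.Injective φ := LinearMap.ker_eq_bot.mp h
    have := LinearMap.finrank_le_finrank_of_injective hinj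
    have h3 : finrank ℝ (ℝ × (ℝ × ℝ)) = 3 := by
      simp [Module.finrank_prod, Module.finrank_self]
    omega
  obtain ⟨X, hXmem, hXne⟩ := (Submodule.ne_bot_iff _).mp hker
  have := LinearMap.mem_ker.mp hXmem
  rw [hφ] at this
  simp only [LinearMap.prod_apply, Function.prod, Prod.mk_eq_zero] at this
  exact ⟨X, hXne, by simpa using this.1, by simpa using this.2.1, by simpa using this.2.2⟩

lemma aux_scalar [Nontrivial V] (e : V →ₗ[ℝ] V) (h : ∀ v, ∃ c : ℝ, e v = c • v) :
    ∃ c : ℝ, ∀ v, e v = c • v := by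
  obtain ⟨v0, hv0⟩ := exists_ne (0 : V)
  obtain ⟨c0, hc0⟩ := h v0
  refine ⟨c0, fun w => ?_⟩
  by_cases hw0 : w = 0
  · simp [hw0]
  by_cases hdep : ∃ t : ℝ, w = t • v0
  · obtain ⟨t, rfl⟩ := hdep
    rw [map_smul, hc0, smul_smul, smul_smul, mul_comm]
  · obtain ⟨cw, hcw⟩ := h w
    obtain ⟨c', hc'⟩ := h (v0 + w)
    rw [map_add, hc0, hcw, smul_add] at hc'
    have hkey : (c0 - c') • v0 = (c' - cw) • w := by
      rw [sub_smul, sub_smul]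
      linear_combination (norm := module) hc'
    by_cases hcc : c0 - c' = 0
    · rw [hcc, zero_smul] at hkey
      have h2 : c' - cw = 0 := by
        rcases smul_eq_zero.mp hkey.symm with h | h
        · exact h
        · exact absurd h hw0
      have : cw = c0 := by
        have h3 : c' = c0 := by linarith [sub_eq_zero.mp hcc]
        linarith [sub_eq_zero.mp h2]
      rw [hcw, this]
    · exfalso
      have hv0w : v0 = ((c' - cw) / (c0 - c')) • w := by
        have := congrArg (fun v : V => (c0 - c')⁻¹ • v) hkey
        simpa [smul_smul, inv_mul_cancel₀ hcc, div_eq_inv_mul] using this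
      have hs : (c' - cw) / (c0 - c') ≠ 0 := by
        intro h0
        rw [h0, zero_smul] at hv0w
        exact hv0 hv0w
      exact hdep ⟨((c' - cw) / (c0 - c'))⁻¹, by
        rw [hv0w, smul_smul, inv_mul_cancel₀ hs, one_smul]⟩

theorem statement_11 [FiniteDimensional ℝ V] (hn : 4 ≤ finrank ℝ V)
    (g : LinearMap.BilinForm ℝ V) (hgs : ∀ X Y, g X Y = g Y X)
    (hgn : g.Nondegenerate)
    (a : V →ₗ[ℝ] V) (ha : ∀ X Y, g (a X) Y = g (a Y) X)
    (hnp : ¬ ∀ X Y, g (a X) Y = (LinearMap.trace ℝ V a / (finrank ℝ V : ℝ)) * g X Y)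
    (hEA : ∀ X1 X2 X3 X4 : V,
      KN (fun x y => g x y) (fun x y => g (a (a x)) y) X1 X2 X3 X4
        + (((finrank ℝ V : ℝ) - 2) / 2)
            * KN (fun x y => g (a x) y) (fun x y => g (a x) y) X1 X2 X3 X4
        - LinearMap.trace ℝ V a * KN (fun x y => g x y) (fun x y => g (a x) y) X1 X2 X3 X4
        + (((LinearMap.trace ℝ V a) ^ 2 - LinearMap.trace ℝ V (a ∘ₗ a))
              / (2 * ((finrank ℝ V : ℝ) - 1)))
            * KN (fun x y => g x y) (fun x y => g x y) X1 X2 X3 X4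
        = 0) :
    ∃ ρ : ℝ,
      (∀ X Y : V,
        g (a (a X)) Y - (LinearMap.trace ℝ V (a ∘ₗ a) / (finrank ℝ V : ℝ)) * g X Y
          = ρ * (g (a X) Y - (LinearMap.trace ℝ V a / (finrank ℝ V : ℝ)) * g X Y)) ∧
      (∀ X1 X2 X3 X4 : V,
        KN (fun x y => g (a x) y
              - ((LinearMap.trace ℝ V a - ρ) / ((finrank ℝ V : ℝ) - 2)) * g x y)
           (fun x y => g (a x) y
              - ((LinearMap.trace ℝ V a - ρ) / ((finrank ℝ V : ℝ) - 2)) * g x y)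
           X1 X2 X3 X4 = 0) := by
  classical
  have hnt : Nontrivial V := nontrivial_of_finrank_pos (R := ℝ) (by omega)
  have hn4 : (4:ℝ) ≤ (finrank ℝ V : ℝ) := by exact_mod_cast hn
  set nR : ℝ := (finrank ℝ V : ℝ) with hnR
  set τ : ℝ := LinearMap.trace ℝ V a with hτ
  set σ2 : ℝ := LinearMap.trace ℝ V (a ∘ₗ a) with hσ2
  have hn0 : nR ≠ 0 := by intro h; rw [h] at hn4; norm_num at hn4
  have h2ne : nR - 2 ≠ 0 := by intro h; nlinarith
  have h1ne : nR - 1 ≠ 0 := by intro h; nlinarith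
  -- symmetry lemmas
  have hB : ∀ X Y : V, g (a X) Y = g X (a Y) := fun X Y => by rw [ha, hgs]
  have hB2 : ∀ X Y : V, g (a (a X)) Y = g X (a (a Y)) := by
    intro X Y
    rw [ha (a X) Y, hgs (a Y) (a X), ha X (a Y), hgs]
  -- a is not scalar
  have hns : ¬ ∃ c : ℝ, ∀ v, a v = c • v := by
    rintro ⟨c, hc⟩
    apply hnp
    have haid : a = c • (LinearMap.id : V →ₗ[ℝ] V) := LinearMap.ext fun v => by simp [hc v]
    have htrc : τ = c * nR := by
      rw [hτ, haid, map_smul, LinearMap.trace_id]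
      simp [hnR, smul_eq_mul]
    intro X Y
    rw [hc X, map_smul, htrc]
    simp only [LinearMap.smul_apply, smul_eq_mul]
    field_simp
  -- CLAIM A : local quadratic dependence
  have claimA : ∀ Z : V, ∃ α β : ℝ, a (a Z) = α • a Z + β • Z := by
    intro Z
    by_contra hcon
    push_neg at hcon
    have hnm : a (a Z) ∉ Submodule.span ℝ ({Z, a Z} : Set V) := by
      intro hmem
      obtain ⟨cz, caz, hzz⟩ := Submodule.mem_span_pair.mp hmem
      exact hcon caz cz (by rw [← hzz]; abel)
    obtain ⟨Y, hY1, hY0⟩ := aux_dual g hgn _ _ hnm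
    have hYZ : g Y Z = 0 := hY0 Z (Submodule.subset_span (by simp))
    have hYaZ : g Y (a Z) = 0 := hY0 (a Z) (Submodule.subset_span (by simp))
    obtain ⟨X, hXne, hX1, hX2, hX3⟩ := aux_perp hn g Z (a Z) (a (a Z))
    have hBXZ : g (a X) Z = 0 := by rw [hB]; exact hX2
    have hB2XZ : g (a (a X)) Z = 0 := by rw [hB2]; exact hX3
    have hvec : ∀ W : V,
        g ((g (a (a Y)) Z - τ * g (a Y) Z + 2 * ((τ^2 - σ2)/(2*(nR-1))) * g Y Z) • X
            + (g Y Z) • (a (a X)) + ((nR - 2) * g (a Y) Z - τ * g Y Z) • a X) W = 0 := by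
      intro W
      have h := hEA X Y Z W
      simp only [KN] at h
      rw [hX1, hBXZ, hB2XZ] at h
      simp only [map_add, map_smul, LinearMap.add_apply, LinearMap.smul_apply, smul_eq_mul]
      linear_combination h
    have hv0 := hgn.1 _ hvec
    have hc1 : g (a (a Y)) Z - τ * g (a Y) Z + 2 * ((τ^2 - σ2)/(2*(nR-1))) * g Y Z = 1 := by
      rw [hB2, hY1, hB Y Z, hYaZ, hYZ]; ring
    have hc3 : (nR - 2) * g (a Y) Z - τ * g Y Z = 0 := by
      rw [hB Y Z, hYaZ, hYZ]; ring
    rw [hc1, hc3, hYZ, one_smul, zero_smul, zero_smul, add_zero, add_zero] at hv0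
    exact hXne hv0
  -- existence of a regular vector
  have hex : ∃ v0 : V, ∀ c : ℝ, a v0 ≠ c • v0 := by
    by_contra hcon; push_neg at hcon
    exact hns (aux_scalar a fun v => hcon v)
  obtain ⟨v0, hreg⟩ := hex
  have hv0ne : v0 ≠ 0 := by
    intro h; exact hreg 0 (by simp [h])
  have hpair : ∀ s t : ℝ, s • v0 + t • a v0 = 0 → s = 0 ∧ t = 0 := by
    intro s t h
    by_cases ht : t = 0
    · subst ht
      rw [zero_smul, add_zero] at h
      exact ⟨(smul_eq_zero.mp h).resolve_right hv0ne, rfl⟩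
    · exfalso
      apply hreg (t⁻¹ * (-s))
      have h3 : t • a v0 = (-s) • v0 := by
        rw [neg_smul]; linear_combination (norm := module) h
      have h4 := congrArg (fun v : V => t⁻¹ • v) h3
      simpa [smul_smul, inv_mul_cancel₀ ht] using h4
  obtain ⟨ρ, β, hρβ⟩ := claimA v0
  -- GLOBALIZATION
  have hglob : ∀ w : V, a (a w) = ρ • a w + β • w := by
    intro w
    by_cases hwP : ∃ x y : ℝ, w = x • v0 + y • a v0
    · obtain ⟨x, y, rfl⟩ := hwP
      simp only [map_add, map_smul, hρβ]
      module
    · by_cases h4 : ∀ q1 q2 q3 q4 : ℝ,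
          q1 • v0 + q2 • a v0 + q3 • w + q4 • a w = 0 → q1 = 0 ∧ q2 = 0 ∧ q3 = 0 ∧ q4 = 0
      · obtain ⟨γ, α, hu⟩ := claimA (v0 + w)
        obtain ⟨αw, βw, hw2⟩ := claimA w
        have hu' := hu
        simp only [map_add, hρβ, hw2] at hu'
        obtain ⟨e1, e2, e3, e4⟩ := h4 (β - α) (ρ - γ) (βw - α) (αw - γ)
          (by linear_combination (norm := module) hu')
        rw [hw2, show αw = ρ by linarith, show βw = β by linarith]
      · push_neg at h4
        obtain ⟨q1, q2, q3, q4, hq, hqne⟩ := h4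
        have hq4 : q4 ≠ 0 := by
          intro h0
          subst h0
          by_cases hq3 : q3 = 0
          · subst hq3
            rw [zero_smul, zero_smul, add_zero, add_zero] at hq
            obtain ⟨e1, e2⟩ := hpair _ _ hq
            exact hqne e1 e2 rfl rfl
          · apply hwP
            refine ⟨-(q1/q3), -(q2/q3), ?_⟩
            have h5 : q3 • w = (-q1) • v0 + (-q2) • a v0 := by
              simp only [neg_smul]
              linear_combination (norm := module) hq
            have h6 := congrArg (fun v : V => q3⁻¹ • v) h5
            simp only [smul_add, smul_smul, inv_mul_cancel₀ hq3, one_smul] at h6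
            rw [h6]
            match_scalars <;> field_simp
        have haw : a w = (-(q3/q4)) • w + (-(q1/q4)) • v0 + (-(q2/q4)) • a v0 := by
          have h5 : q4 • a w = (-q1) • v0 + (-q2) • a v0 + (-q3) • w := by
            simp only [neg_smul]
            linear_combination (norm := module) hq
          have h6 := congrArg (fun v : V => q4⁻¹ • v) h5
          simp only [smul_add, smul_smul, inv_mul_cancel₀ hq4, one_smul] at h6
          rw [h6]
          match_scalars <;> field_simp
        set c : ℝ := -(q3/q4) with hcdef
        set x : ℝ := -(q1/q4) with hxdef
        set y : ℝ := -(q2/q4) with hydef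
        have h3ind : ∀ r1 r2 r3 : ℝ, r1 • v0 + r2 • a v0 + r3 • w = 0 →
            r1 = 0 ∧ r2 = 0 ∧ r3 = 0 := by
          intro r1 r2 r3 hcomb
          by_cases hr3 : r3 = 0
          · subst hr3
            rw [zero_smul, add_zero] at hcomb
            obtain ⟨e1, e2⟩ := hpair _ _ hcomb
            exact ⟨e1, e2, rfl⟩
          · exfalso
            apply hwP
            refine ⟨-(r1/r3), -(r2/r3), ?_⟩
            have h5 : r3 • w = (-r1) • v0 + (-r2) • a v0 := by
              simp only [neg_smul]
              linear_combination (norm := module) hcomb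
            have h6 := congrArg (fun v : V => r3⁻¹ • v) h5
            simp only [smul_add, smul_smul, inv_mul_cancel₀ hr3, one_smul] at h6
            rw [h6]
            match_scalars <;> field_simp
        have hKey : ∀ t : ℝ, t * ((β - c^2 + t*(c*x+y*β))*(1+t*y))
            = t * ((ρ + t*(c*y+x+y*ρ))*(t*x-c)) := by
          intro t
          obtain ⟨γ, α, hA⟩ := claimA (v0 + t • w)
          simp only [map_add, map_smul, hρβ, haw] at hA
          obtain ⟨hr1, hr2, hr3⟩ := h3ind
            (β + t*(c*x+y*β) - (γ*(t*x) + α))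
            (ρ + t*(c*y+x+y*ρ) - γ*(1+t*y))
            (t*c^2 - (γ*(t*c) + α*t))
            (by linear_combination (norm := module) hA)
          linear_combination (t*(1+t*y))*hr1 - (t*(t*x-c))*hr2 - (1+t*y)*hr3
        have K1 := hKey 1
        have K2 := hKey 2
        have K3 := hKey 3
        have hp0 : c^2 - ρ*c - β = 0 := by
          linear_combination (-3)*K1 + (3/2)*K2 - (1/3)*K3
        have hp1 : 2*c*x + 2*β*y - ρ*x + c*ρ*y = 0 := by
          linear_combination (-5/2)*K1 + 2*K2 - (1/2)*K3
        have hp2 : β*y^2 - x^2 - ρ*x*y = 0 := by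
          linear_combination (1/2)*K1 - (1/2)*K2 + (1/6)*K3
        have hxcy : x + c*y = 0 := by
          have hfac : (x + c*y)*(2*x + ρ*y) = 0 := by
            linear_combination y*hp1 - 2*hp2
          rcases mul_eq_zero.mp hfac with h | h2x
          · exact h
          · have hsq : ((c - ρ/2)*y)^2 = 0 := by
              linear_combination y^2*hp0 + hp2 + (x/2 + ρ*y/4)*h2x
            have hcy : (c - ρ/2)*y = 0 := sq_eq_zero_iff.mp hsq
            linear_combination hcy + (1/2)*h2x
        simp only [haw, map_add, map_smul, hρβ]
        match_scalars
        · linear_combination hp0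
        · linear_combination (-y)*hp0 + (c-ρ)*hxcy
        · linear_combination hxcy
  -- consequences
  have hB2form : ∀ x y : V, g (a (a x)) y = ρ * g (a x) y + β * g x y := by
    intro x y
    rw [hglob x, map_add, map_smul, map_smul]
    simp [LinearMap.add_apply, LinearMap.smul_apply, smul_eq_mul]
  have htr2 : σ2 = ρ * τ + β * nR := by
    have hcomp : a ∘ₗ a = ρ • a + β • (LinearMap.id : V →ₗ[ℝ] V) :=
      LinearMap.ext fun v => by simp [LinearMap.comp_apply, hglob v]
    rw [hσ2, hcomp, map_add, map_smul, map_smul, LinearMap.trace_id]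
    simp only [smul_eq_mul, ← hτ, ← hnR]
    try ring
  refine ⟨ρ, ?_, ?_⟩
  · intro X Y
    have hdiv : σ2 / nR = ρ * (τ / nR) + β := by
      rw [htr2]; field_simp
    rw [hB2form, hdiv]; ring
  · -- second goal
    set μR : ℝ := (τ - ρ)/(nR - 2) with hμdef
    have hμ' : μR * (nR - 2) = τ - ρ := by rw [hμdef]; field_simp
    have hDD : ∀ X1 X2 X3 X4 : V,
        (nR - 2) * (KN (fun x y => g (a x) y - μR * g x y)
                       (fun x y => g (a x) y - μR * g x y) X1 X2 X3 X4)
        = (μR^2*(nR-2) - 2*β - 2*((τ^2 - σ2)/(2*(nR-1))))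
          * (KN (fun x y => g x y) (fun x y => g x y) X1 X2 X3 X4) := by
      intro X1 X2 X3 X4
      have h := hEA X1 X2 X3 X4
      simp only [KN] at h ⊢
      simp only [hB2form] at h
      linear_combination 2*h
        + (-2*(g X1 X4 * g (a X2) X3 + g X2 X3 * g (a X1) X4
            - g X1 X3 * g (a X2) X4 - g X2 X4 * g (a X1) X3))*hμ'
    have hΘ : μR^2*(nR-2) - 2*β - 2*((τ^2 - σ2)/(2*(nR-1))) = 0 := by
      by_contra hΘne
      have hsc : ∀ Z : V, ∃ t : ℝ, a Z - μR • Z = t • Z := by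
        intro Z
        by_cases hZ0 : Z = 0
        · exact ⟨0, by simp [hZ0]⟩
        by_contra hcon
        push_neg at hcon
        have hnm : Z ∉ Submodule.span ℝ ({a Z - μR • Z} : Set V) := by
          intro hmem
          obtain ⟨s, hs⟩ := Submodule.mem_span_singleton.mp hmem
          have hs0 : s ≠ 0 := by
            rintro rfl; rw [zero_smul] at hs; exact hZ0 hs.symm
          apply hcon s⁻¹
          have h7 := congrArg (fun v : V => s⁻¹ • v) hs
          simpa [smul_smul, inv_mul_cancel₀ hs0] using h7
        obtain ⟨Y, hY1, hY0⟩ := aux_dual g hgn _ _ hnm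
        have hYe : g Y (a Z - μR • Z) = 0 :=
          hY0 _ (Submodule.mem_span_singleton_self _)
        obtain ⟨X, hXne, hXZ, hXe, _⟩ := aux_perp hn g Z (a Z - μR • Z) 0
        have hXaZ : g (a X) Z = 0 := by
          rw [hB]
          have h8 : g X (a Z) - μR * g X Z = 0 := by
            simpa [map_sub, map_smul, smul_eq_mul] using hXe
          rw [hXZ] at h8; linarith
        have hYaZ : g (a Y) Z = μR * g Y Z := by
          rw [hB]
          have h8 : g Y (a Z) - μR * g Y Z = 0 := by
            simpa [map_sub, map_smul, smul_eq_mul] using hYe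
          linarith
        have hgX : ∀ W : V, g X W = 0 := by
          intro W
          have h := hDD X Y Z W
          simp only [KN] at h
          rw [hXZ, hXaZ, hYaZ, hY1] at h
          have h9 : (μR^2*(nR-2) - 2*β - 2*((τ^2 - σ2)/(2*(nR-1)))) * (2 * g X W) = 0 := by
            linear_combination -h
          rcases mul_eq_zero.mp h9 with h' | h'
          · exact absurd h' hΘne
          · linarith
        exact hXne (hgn.1 X hgX)
      obtain ⟨lam, hlam⟩ := aux_scalar (a - μR • LinearMap.id) (fun v => by
        obtain ⟨t, ht⟩ := hsc v
        exact ⟨t, by simpa [LinearMap.sub_apply, LinearMap.smul_apply] using ht⟩)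
      apply hns
      refine ⟨μR + lam, fun v => ?_⟩
      have h10 := hlam v
      simp only [LinearMap.sub_apply, LinearMap.smul_apply, LinearMap.id_apply] at h10
      rw [add_smul]
      linear_combination (norm := module) h10
    intro X1 X2 X3 X4
    have h := hDD X1 X2 X3 X4
    rw [hΘ, zero_mul] at h
    rcases mul_eq_zero.mp h with h' | h'
    · exact absurd h' h2ne
    · exact h'
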